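/- Let K be a differential field with derivation ∂ and constants C, and let x ∈ K satisfy ∂ x = 1 (so x is non-constant). Let μ₁, …, μ_k ∈ C be pairwise distinct, and y₁, …, y_k ∈ K nonzero elements with ∂ y_i = μ_i · y_i. Then the family {x^j · y_i : 1 ≤ i ≤ k, 0 ≤ j < n_i} is linearly independent over C, for any multiplicities n_i ≥ 1. -/

import Mathlib

open Polynomial Finset

section
variable {K : Type*} [Field K] [CharZero K] {del : K → K}

set_option linter.unusedSectionVars false

theorem my_del_zero (hadd : ∀ a b : K, del (a + b) = del a + del b) : del 0 = 0 := by
  have h := hadd 0 0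
  rw [add_zero] at h
  exact (left_eq_add.mp h)

theorem my_del_one (hmul : ∀ a b : K, del (a * b) = a * del b + b * del a) : del 1 = 0 := by
  have h := hmul 1 1
  simp only [mul_one, one_mul] at h
  exact (left_eq_add.mp h)

theorem my_del_sum (hadd : ∀ a b : K, del (a + b) = del a + del b)
    {ι : Type*} (s : Finset ι) (f : ι → K) :
    del (∑ i ∈ s, f i) = ∑ i ∈ s, del (f i) := by
  classical
  induction s using Finset.induction_on with
  | empty => simpa using my_del_zero hadd
  | insert a s h ih => rw [Finset.sum_insert h, Finset.sum_insert h, hadd, ih]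

theorem my_del_nat (hadd : ∀ a b : K, del (a + b) = del a + del b)
    (hmul : ∀ a b : K, del (a * b) = a * del b + b * del a) (n : ℕ) :
    del (n : K) = 0 := by
  induction n with
  | zero => simpa using my_del_zero hadd
  | succ m ih => push_cast; rw [hadd, ih, my_del_one hmul, add_zero]

theorem my_del_sub (hadd : ∀ a b : K, del (a + b) = del a + del b) (a b : K) :
    del (a - b) = del a - del b := by
  have h := hadd (a - b) b
  rw [sub_add_cancel] at h
  linear_combination -h

theorem my_del_pow (hmul : ∀ a b : K, del (a * b) = a * del b + b * del a)
    {x : K} (hx : del x = 1) (i : ℕ) :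
    del (x ^ i) = i * x ^ (i - 1) := by
  induction i with
  | zero => simpa using my_del_one hmul
  | succ m ih =>
    rw [pow_succ, hmul, hx, ih]
    cases m with
    | zero => simp
    | succ j => push_cast; ring

theorem my_del_eval (hadd : ∀ a b : K, del (a + b) = del a + del b)
    (hmul : ∀ a b : K, del (a * b) = a * del b + b * del a)
    {x : K} (hx : del x = 1) (p : K[X]) (hp : ∀ m, del (p.coeff m) = 0) :
    del (p.eval x) = p.derivative.eval x := by
  rw [Polynomial.eval_eq_sum, Polynomial.derivative_eval, Polynomial.sum_def,
    Polynomial.sum_def, my_del_sum hadd]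
  refine Finset.sum_congr rfl fun m _ => ?_
  rw [hmul, hp m, my_del_pow hmul hx, mul_zero, add_zero, mul_assoc]

end

section
variable {K : Type*} [Field K] [CharZero K] {del : K → K}

theorem my_key (hadd : ∀ a b : K, del (a + b) = del a + del b)
    (hmul : ∀ a b : K, del (a * b) = a * del b + b * del a)
    {x : K} (hx : del x = 1) :
    ∀ (k : ℕ) (μ : Fin k → K), (∀ i, del (μ i) = 0) → Function.Injective μ →
    ∀ y : Fin k → K, (∀ i, y i ≠ 0) → (∀ i, del (y i) = μ i * y i) →
    ∀ p : Fin k → K[X], (∀ i m, del ((p i).coeff m) = 0) →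
    (∑ i, (p i).eval x * y i) = 0 → ∀ i, p i = 0 := by
  intro k
  induction k with
  | zero => exact fun _ _ _ _ _ _ _ _ _ i => i.elim0
  | succ k IH =>
    intro μ hμC hμinj y hy0 hy p hpC hsum
    suffices claim : ∀ N (p : Fin (k+1) → K[X]), (∀ i m, del ((p i).coeff m) = 0) →
        (∑ i, (p i).eval x * y i) = 0 →
        (p (Fin.last k) = 0 ∨ (p (Fin.last k)).natDegree < N) → ∀ i, p i = 0 by
      exact claim ((p (Fin.last k)).natDegree + 1) p hpC hsum (Or.inr (Nat.lt_succ_self _))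
    intro N
    induction N with
    | zero =>
      intro p hpC hsum h0
      have hlast : p (Fin.last k) = 0 := h0.resolve_right (by omega)
      have hsum' : ∑ i : Fin k, (p i.castSucc).eval x * y i.castSucc = 0 := by
        rw [Fin.sum_univ_castSucc, hlast] at hsum
        simpa using hsum
      have hrec := IH (fun i => μ i.castSucc) (fun i => hμC _)
        (fun a b hab => by
          have := hμinj hab
          exact Fin.castSucc_injective k this)
        (fun i => y i.castSucc) (fun i => hy0 _) (fun i => hy _)
        (fun i => p i.castSucc) (fun i m => hpC _ _) hsum'
      intro i
      refine Fin.lastCases hlast (fun j => hrec j) i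
    | succ N IHN =>
      intro p hpC hsum h0
      by_cases hlast : p (Fin.last k) = 0
      · exact IHN p hpC hsum (Or.inl hlast)
      exfalso
      set L := μ (Fin.last k) with hL
      set q : Fin (k+1) → K[X] :=
        fun i => derivative (p i) + Polynomial.C (μ i - L) * p i with hq
      have hqC : ∀ i m, del ((q i).coeff m) = 0 := by
        intro i m
        rw [hq]
        simp only [Polynomial.coeff_add, Polynomial.coeff_C_mul, Polynomial.coeff_derivative]
        have hnat : del ((m : K) + 1) = 0 := by
          have h := my_del_nat hadd hmul (m + 1)
          push_cast at h
          exact h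
        rw [hadd, hmul, hmul, hpC, my_del_sub hadd, hμC, hL, hμC]
        simp [hnat, hpC]
      have hqsum : ∑ i, (q i).eval x * y i = 0 := by
        have h1 : ∑ i, del ((p i).eval x * y i) = 0 := by
          rw [← my_del_sum hadd, hsum, my_del_zero hadd]
        calc ∑ i, (q i).eval x * y i
            = ∑ i, (del ((p i).eval x * y i) - L * ((p i).eval x * y i)) := by
              refine Finset.sum_congr rfl fun i _ => ?_
              rw [hmul, hy i, my_del_eval hadd hmul hx _ (hpC i), hq]
              simp only [Polynomial.eval_add, Polynomial.eval_mul, Polynomial.eval_C]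
              ring
          _ = 0 := by
              rw [Finset.sum_sub_distrib, h1, ← Finset.mul_sum, hsum, mul_zero, sub_zero]
      have hqlast : q (Fin.last k) = derivative (p (Fin.last k)) := by
        rw [hq]; simp [hL]
      have hq0 : ∀ i, q i = 0 := by
        refine IHN q hqC hqsum ?_
        rw [hqlast]
        by_cases hd : (p (Fin.last k)).natDegree = 0
        · left
          rw [Polynomial.eq_C_of_natDegree_eq_zero hd, Polynomial.derivative_C]
        · right
          have h2 := Polynomial.natDegree_derivative_lt hd
          have h3 : (p (Fin.last k)).natDegree < N + 1 := h0.resolve_left hlast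
          omega
      -- p last is a nonzero constant
      have hplastC : p (Fin.last k) = Polynomial.C ((p (Fin.last k)).coeff 0) := by
        apply Polynomial.eq_C_of_derivative_eq_zero
        rw [← hqlast]; exact hq0 _
      have ha : (p (Fin.last k)).coeff 0 ≠ 0 := by
        intro h
        apply hlast
        rw [hplastC, h, map_zero]
      -- other p's vanish
      have hcast : ∀ i : Fin k, p i.castSucc = 0 := by
        intro i
        have hμne : μ i.castSucc - L ≠ 0 := by
          rw [sub_ne_zero, hL]
          intro h
          exact absurd (hμinj h) (Fin.castSucc_lt_last i).ne
        by_contra hP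
        have hqi := hq0 i.castSucc
        rw [hq] at hqi
        have hder : derivative (p i.castSucc) = -(Polynomial.C (μ i.castSucc - L) * p i.castSucc) := by
          linear_combination hqi
        by_cases hd : (p i.castSucc).natDegree = 0
        · have hPc := Polynomial.eq_C_of_natDegree_eq_zero hd
          rw [hPc, Polynomial.derivative_C, ← Polynomial.C_mul] at hder
          have h3 : (μ i.castSucc - L) * (p i.castSucc).coeff 0 = 0 :=
            Polynomial.C_eq_zero.mp (neg_eq_zero.mp hder.symm)
          rcases mul_eq_zero.mp h3 with h | h
          · exact hμne h
          · exact hP (by rw [hPc, h, map_zero])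
        · have h2 := Polynomial.natDegree_derivative_lt hd
          rw [hder] at h2
          rw [natDegree_neg, Polynomial.natDegree_C_mul hμne] at h2
          omega
      -- contradiction with the sum
      rw [Fin.sum_univ_castSucc] at hsum
      have : ∑ i : Fin k, (p i.castSucc).eval x * y i.castSucc = 0 := by
        refine Finset.sum_eq_zero fun i _ => ?_
        rw [hcast i, Polynomial.eval_zero, zero_mul]
      rw [this, zero_add, hplastC, Polynomial.eval_C] at hsum
      exact (mul_ne_zero ha (hy0 _)) hsum

end

/-- In a differential field `(K, ∂)` with constants `C = ker ∂`,
if `∂ x = 1`, `μ₁, …, μ_k ∈ C` are pairwise distinct and `y_i ≠ 0` satisfy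
`∂ y_i = μ_i y_i`, then the family `{x^j · y_i : i < k, j < n_i}` is linearly
independent over `C`, for any multiplicities `n_i ≥ 1`. -/
theorem canonical_solutions_linearIndependent (K : Type*) [Field K] [CharZero K]
    (del : K → K)
    (hadd : ∀ a b : K, del (a + b) = del a + del b)
    (hmul : ∀ a b : K, del (a * b) = a * del b + b * del a)
    (x : K) (hx : del x = 1)
    (k : ℕ) (μ : Fin k → K) (hμC : ∀ i, del (μ i) = 0)
    (hμdist : Function.Injective μ)
    (y : Fin k → K) (hy0 : ∀ i, y i ≠ 0) (hy : ∀ i, del (y i) = μ i * y i)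
    (n : Fin k → ℕ) (hn : ∀ i, 1 ≤ n i)
    (c : (i : Fin k) → Fin (n i) → K) (hcC : ∀ i j, del (c i j) = 0)
    (hsum : ∑ i : Fin k, ∑ j : Fin (n i), c i j * x ^ (j : ℕ) * y i = 0) :
    ∀ i j, c i j = 0 := by
  classical
  set p : Fin k → Polynomial K :=
    fun i => ∑ j : Fin (n i), Polynomial.C (c i j) * Polynomial.X ^ (j : ℕ) with hp
  have hpC : ∀ i m, del ((p i).coeff m) = 0 := by
    intro i m
    rw [hp]
    simp only [Polynomial.finset_sum_coeff, Polynomial.coeff_C_mul, Polynomial.coeff_X_pow]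
    rw [my_del_sum hadd]
    refine Finset.sum_eq_zero fun j _ => ?_
    split_ifs with h
    · rw [mul_one]; exact hcC i j
    · rw [mul_zero]; exact my_del_zero hadd
  have heval : ∀ i, (p i).eval x = ∑ j : Fin (n i), c i j * x ^ (j : ℕ) := by
    intro i
    rw [hp]
    simp [Polynomial.eval_finset_sum]
  have hsum' : ∑ i : Fin k, (p i).eval x * y i = 0 := by
    rw [← hsum]
    refine Finset.sum_congr rfl fun i _ => ?_
    rw [heval, Finset.sum_mul]
  have hp0 := my_key hadd hmul hx k μ hμC hμdist y hy0 hy p hpC hsum'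
  intro i j
  have hco : (p i).coeff (j : ℕ) = c i j := by
    rw [hp]
    simp only [Polynomial.finset_sum_coeff, Polynomial.coeff_C_mul, Polynomial.coeff_X_pow]
    rw [Finset.sum_eq_single j]
    · simp
    · intro b _ hb
      rw [if_neg, mul_zero]
      exact fun h => hb (Fin.ext h.symm)
    · intro h
      exact absurd (Finset.mem_univ j) h
  rw [← hco, hp0 i, Polynomial.coeff_zero]
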